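/- Let S be a positive semi-definite d×d matrix with x ∈ range(S), h ∈ range(S), S' = S + x xᵀ, β = 1 + xᵀ S† x, g ∈ ℝ with |g| ≤ 1, and α ≥ 9/8. Then e^{(hᵀ S'† h)/(2α)} · ( (g hᵀ S'† x)/α + e^{−(g hᵀ S'† x)/α} ) ≤ e^{(hᵀ S† h)/(2α)}. -/

import Mathlib

open Matrix Real Finset

section Scalar

private lemma poly_ineq (u : ℝ) (h0 : 0 ≤ u) (h1 : u ≤ 8/9) :
    (1+u+u^2/2+u^3/6+(5/96)*u^4)^2 - 2*u ≤ 1 + (9/4)*u^2 + (81/32)*u^4 + (729/384)*u^6 := by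
  nlinarith [sq_nonneg u, sq_nonneg (u-1/3), sq_nonneg (u^2-u/3), sq_nonneg (u^3),
    mul_nonneg h0 h0, sq_nonneg (u^2 - u), mul_nonneg (mul_nonneg h0 h0) h0, sq_nonneg (u*(u-1/3))]

private lemma exp_lb (y : ℝ) (hy : 0 ≤ y) : 1 + y + y^2/2 + y^3/6 ≤ Real.exp y := by
  have := Real.sum_le_exp_of_nonneg hy 4
  simp [Finset.sum_range_succ, Nat.factorial] at this
  linarith

private lemma exp_ub (u : ℝ) (h0 : 0 ≤ u) (h1 : u ≤ 1) :
    Real.exp u ≤ 1 + u + u^2/2 + u^3/6 + (5/96)*u^4 := by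
  have := Real.exp_bound' h0 h1 (n := 4) (by norm_num)
  simp [Finset.sum_range_succ, Nat.factorial] at this
  linarith

private lemma core (s : ℝ) (hs : 0 ≤ s) : Real.exp s - s ≤ Real.exp (9/16 * s^2) := by
  rcases le_or_gt s (16/9) with h | h
  · set u := s/2 with hu
    have hu0 : 0 ≤ u := by positivity
    have hu1 : u ≤ 8/9 := by rw [hu]; linarith
    have hexp : Real.exp s = Real.exp u * Real.exp u := by rw [← Real.exp_add, hu]; ring_nf
    have hub := exp_ub u hu0 (by linarith)
    have hq0 : (0:ℝ) ≤ 1 + u + u^2/2 + u^3/6 + (5/96)*u^4 := by positivity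
    have h1 : Real.exp s ≤ (1+u+u^2/2+u^3/6+(5/96)*u^4)^2 := by
      rw [hexp, sq]
      exact mul_le_mul hub hub (Real.exp_nonneg u) hq0
    have hy : (9:ℝ)/16 * s^2 = 9/4 * u^2 := by rw [hu]; ring
    have h2 : 1 + (9/4)*u^2 + (81/32)*u^4 + (729/384)*u^6 ≤ Real.exp (9/16 * s^2) := by
      rw [hy]
      have := exp_lb (9/4*u^2) (by positivity)
      convert this using 2 <;> ring
    have := poly_ineq u hu0 hu1
    have hsu : s = 2*u := by rw [hu]; ring
    nlinarith
  · have h1 : s ≤ 9/16 * s^2 := by nlinarith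
    have := Real.exp_le_exp.2 h1
    linarith

private lemma scalar_key (t : ℝ) : t + Real.exp (-t) ≤ Real.exp (9/16 * t^2) := by
  rcases le_or_gt 0 t with h | h
  · have h1 : t + Real.exp (-t) ≤ Real.cosh t := by
      have hst : Real.sinh t ≥ t := Real.self_le_sinh_iff.2 h
      have hc : Real.cosh t - Real.sinh t = Real.exp (-t) := by
        rw [Real.cosh_eq, Real.sinh_eq]; ring
      linarith
    have h2 : Real.cosh t ≤ Real.exp (t^2/2) := Real.cosh_le_exp_half_sq t
    have h3 : Real.exp (t^2/2) ≤ Real.exp (9/16*t^2) := Real.exp_le_exp.2 (by nlinarith [sq_nonneg t])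
    linarith
  · calc t + Real.exp (-t) = Real.exp (-t) - (-t) := by ring
    _ ≤ Real.exp (9/16 * (-t)^2) := core (-t) (by linarith)
    _ = Real.exp (9/16 * t^2) := by ring_nf

private lemma endgame (A a β α g : ℝ) (hβ1 : 1 ≤ β) (hα : 9/8 ≤ α) (hg : |g| ≤ 1) :
    Real.exp ((A - β⁻¹*a^2)/(2*α)) * (g*(a/β)/α + Real.exp (-(g*(a/β))/α)) ≤
      Real.exp (A/(2*α)) := by
  have hα0 : (0:ℝ) < α := by linarith
  have hβ0 : (0:ℝ) < β := by linarith
  have hg2 : g^2 ≤ 1 := by nlinarith [sq_abs g, abs_nonneg g]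
  set t : ℝ := g * (a / β) / α with ht
  have hneg : -(g * (a / β)) / α = -t := by rw [ht]; ring
  rw [hneg]
  have main : 9/16*t^2 ≤ β⁻¹*a^2/(2*α) := by
    have hL : 9/16*t^2 = (9/16*(g^2*a^2))/(β^2*α^2) := by rw [ht]; field_simp
    have hR : β⁻¹*a^2/(2*α) = a^2/(β*(2*α)) := by field_simp
    rw [hL, hR, div_le_div_iff₀ (by positivity) (by positivity)]
    have h1 : g^2*a^2 ≤ a^2 := by nlinarith [sq_nonneg a, sq_nonneg g]
    have hab : (9:ℝ)/8 ≤ α*β := by nlinarith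
    calc 9/16*(g^2*a^2)*(β*(2*α)) = (g^2*a^2)*((9/8)*(α*β)) := by ring
      _ ≤ a^2*((9/8)*(α*β)) := by
          apply mul_le_mul_of_nonneg_right h1
          positivity
      _ ≤ a^2*((α*β)*(α*β)) := by
          apply mul_le_mul_of_nonneg_left _ (sq_nonneg a)
          nlinarith
      _ = a^2*(β^2*α^2) := by ring
  have hsum : (A - β⁻¹*a^2)/(2*α) + β⁻¹*a^2/(2*α) = A/(2*α) := by ring
  calc Real.exp ((A - β⁻¹*a^2)/(2*α)) * (g * (a/β)/α + Real.exp (-t))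
      = Real.exp ((A - β⁻¹*a^2)/(2*α)) * (t + Real.exp (-t)) := by rw [ht]
    _ ≤ Real.exp ((A - β⁻¹*a^2)/(2*α)) * Real.exp (9/16*t^2) :=
        mul_le_mul_of_nonneg_left (scalar_key t) (Real.exp_nonneg _)
    _ = Real.exp ((A - β⁻¹*a^2)/(2*α) + 9/16*t^2) := (Real.exp_add _ _).symm
    _ ≤ Real.exp (A/(2*α)) := Real.exp_le_exp.2 (by linarith)

end Scalar

section MatrixPart

variable {d : ℕ}

/-- `Sd` is the Moore–Penrose pseudoinverse of `S`. -/
def IsMoorePenroseInv {d : ℕ} (S Sd : Matrix (Fin d) (Fin d) ℝ) : Prop :=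
  S * Sd * S = S ∧ Sd * S * Sd = Sd ∧ (S * Sd)ᵀ = S * Sd ∧ (Sd * S)ᵀ = Sd * S

private lemma mp_unique {M A B : Matrix (Fin d) (Fin d) ℝ}
    (hA : IsMoorePenroseInv M A) (hB : IsMoorePenroseInv M B) : A = B := by
  obtain ⟨hA1, hA2, hA3, hA4⟩ := hA
  obtain ⟨hB1, hB2, hB3, hB4⟩ := hB
  have hAM : A * M = B * M := by
    calc A * M = A * (M * B * M) := by rw [hB1]
    _ = (A * M) * (B * M) := by simp only [mul_assoc]
    _ = (A * M)ᵀ * (B * M)ᵀ := by rw [hA4, hB4]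
    _ = (M * A * M)ᵀ * Bᵀ := by simp only [transpose_mul, mul_assoc]
    _ = Mᵀ * Bᵀ := by rw [hA1]
    _ = (B * M)ᵀ := (transpose_mul _ _).symm
    _ = B * M := hB4
  have hMA : M * A = M * B := by
    calc M * A = (M * B * M) * A := by rw [hB1]
    _ = (M * B) * (M * A) := by simp only [mul_assoc]
    _ = (M * B)ᵀ * (M * A)ᵀ := by rw [hB3, hA3]
    _ = Bᵀ * (M * A * M)ᵀ := by simp only [transpose_mul, mul_assoc]
    _ = Bᵀ * Mᵀ := by rw [hA1]
    _ = (M * B)ᵀ := (transpose_mul _ _).symm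
    _ = M * B := hB3
  calc A = A * M * A := hA2.symm
  _ = B * M * A := by rw [hAM]
  _ = B * (M * A) := by rw [mul_assoc]
  _ = B * (M * B) := by rw [hMA]
  _ = B * M * B := by rw [mul_assoc]
  _ = B := hB2

private lemma mul_vecMulVec (A : Matrix (Fin d) (Fin d) ℝ) (x y : Fin d → ℝ) :
    A * vecMulVec x y = vecMulVec (A *ᵥ x) y := by
  ext i j
  simp [Matrix.mul_apply, vecMulVec_apply, mulVec, dotProduct, Finset.sum_mul, mul_assoc]

private lemma vecMulVec_mul (x y : Fin d → ℝ) (A : Matrix (Fin d) (Fin d) ℝ) :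
    vecMulVec x y * A = vecMulVec x (Aᵀ *ᵥ y) := by
  ext i j
  simp [Matrix.mul_apply, vecMulVec_apply, mulVec, dotProduct, Finset.mul_sum, transpose_apply]
  congr 1; ext k; ring

private lemma vecMulVec_mulVec (x y v : Fin d → ℝ) :
    vecMulVec x y *ᵥ v = (y ⬝ᵥ v) • x := by
  ext i
  simp [mulVec, dotProduct, vecMulVec_apply, Finset.mul_sum, Pi.smul_apply, smul_eq_mul]
  rw [Finset.sum_mul]
  congr 1; ext k; ring

private lemma smul_vecMulVec (a : ℝ) (x y : Fin d → ℝ) :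
    vecMulVec (a • x) y = a • vecMulVec x y := by
  ext i j
  simp [vecMulVec_apply, smul_eq_mul, mul_assoc]

private lemma mulVec_dot (A : Matrix (Fin d) (Fin d) ℝ) (u v : Fin d → ℝ) :
    (A *ᵥ u) ⬝ᵥ v = u ⬝ᵥ (Aᵀ *ᵥ v) := by
  simp [dotProduct, mulVec, Finset.sum_mul, Finset.mul_sum, transpose_apply]
  rw [Finset.sum_comm]
  congr 1; ext i; congr 1; ext j; ring

end MatrixPart

theorem stmt_16 (d : ℕ) (S Sd S'd : Matrix (Fin d) (Fin d) ℝ)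
    (hS : S.PosSemidef) (hSd : IsMoorePenroseInv S Sd)
    (x h : Fin d → ℝ) (hx : ∃ z, S.mulVec z = x) (hh : ∃ z, S.mulVec z = h)
    (hS'd : IsMoorePenroseInv (S + vecMulVec x x) S'd)
    (g α : ℝ) (hg : |g| ≤ 1) (hα : 9 / 8 ≤ α) :
    Real.exp ((h ⬝ᵥ S'd.mulVec h) / (2 * α)) *
        ((g * (h ⬝ᵥ S'd.mulVec x)) / α + Real.exp (-(g * (h ⬝ᵥ S'd.mulVec x)) / α)) ≤
      Real.exp ((h ⬝ᵥ Sd.mulVec h) / (2 * α)) := by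
  obtain ⟨z, hz⟩ := hx
  obtain ⟨hSd1, hSd2, hSd3, hSd4⟩ := hSd
  -- symmetry of S
  have hSsym : Sᵀ = S := by
    have := hS.1
    simpa [Matrix.IsHermitian, Matrix.conjTranspose_eq_transpose_of_trivial] using this
  -- symmetry of Sd
  have hSdmp : IsMoorePenroseInv S Sd := ⟨hSd1, hSd2, hSd3, hSd4⟩
  have hSdTmp : IsMoorePenroseInv S Sdᵀ := by
    refine ⟨?_, ?_, ?_, ?_⟩
    · have := congrArg Matrix.transpose hSd1
      simp only [transpose_mul, hSsym] at this
      simpa [mul_assoc] using this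
    · have := congrArg Matrix.transpose hSd2
      simp only [transpose_mul, hSsym] at this
      simpa [mul_assoc] using this
    · calc (S * Sdᵀ)ᵀ = Sd * Sᵀ := by simp [transpose_mul]
      _ = Sd * S := by rw [hSsym]
      _ = (Sd * S)ᵀ := hSd4.symm
      _ = Sᵀ * Sdᵀ := by simp [transpose_mul]
      _ = S * Sdᵀ := by rw [hSsym]
    · calc (Sdᵀ * S)ᵀ = Sᵀ * Sd := by simp [transpose_mul]
      _ = S * Sd := by rw [hSsym]
      _ = (S * Sd)ᵀ := hSd3.symm
      _ = Sdᵀ * Sᵀ := by simp [transpose_mul]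
      _ = Sdᵀ * S := by rw [hSsym]
  have hSdsym : Sdᵀ = Sd := mp_unique hSdTmp hSdmp
  -- commutation
  have hcomm : Sd * S = S * Sd := by
    calc Sd * S = (Sd * S)ᵀ := hSd4.symm
    _ = Sᵀ * Sdᵀ := by simp [transpose_mul]
    _ = S * Sd := by rw [hSsym, hSdsym]
  -- notation
  set w : Fin d → ℝ := Sd *ᵥ x with hw
  set c : ℝ := x ⬝ᵥ w with hc
  set β : ℝ := 1 + c with hβ
  -- basic vector facts
  have hPx : (S * Sd) *ᵥ x = x := by
    rw [← hz, mulVec_mulVec, hSd1]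
  have hSw : S *ᵥ w = x := by
    rw [hw, mulVec_mulVec]
    exact hPx
  have hPw : (Sd * S) *ᵥ w = w := by
    rw [hw, mulVec_mulVec, hSd2]
  have hwxc : w ⬝ᵥ x = c := by rw [hc, dotProduct_comm]
  have hc0 : 0 ≤ c := by
    have h1 : c = z ⬝ᵥ (S *ᵥ z) := by
      rw [hc, hw, ← hz, mulVec_dot, hSsym, mulVec_mulVec, mulVec_mulVec, hSd1]
    rw [h1]
    have := hS.dotProduct_mulVec_nonneg z
    simpa using this
  have hβpos : 0 < β := by rw [hβ]; linarith
  have hβ0 : β ≠ 0 := ne_of_gt hβpos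
  -- the candidate pseudoinverse
  set M : Matrix (Fin d) (Fin d) ℝ := Sd - β⁻¹ • vecMulVec w w with hM
  set V : Matrix (Fin d) (Fin d) ℝ := vecMulVec x x with hV
  have hSW : S * vecMulVec w w = vecMulVec x w := by rw [mul_vecMulVec, hSw]
  have hVSd : V * Sd = vecMulVec x w := by
    rw [hV, _root_.vecMulVec_mul, hSdsym, ← hw]
  have hVW : V * vecMulVec w w = c • vecMulVec x w := by
    rw [hV, _root_.mul_vecMulVec, vecMulVec_mulVec, ← hc, smul_vecMulVec]
  have hSdV : Sd * V = vecMulVec w x := by rw [hV, _root_.mul_vecMulVec, ← hw]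
  have hWS : vecMulVec w w * S = vecMulVec w x := by
    rw [_root_.vecMulVec_mul, hSsym, hSw]
  have hWV : vecMulVec w w * V = c • vecMulVec w x := by
    rw [hV, _root_.mul_vecMulVec, vecMulVec_mulVec, hwxc, smul_vecMulVec]
  -- the two key products
  have hS'M : (S + V) * M = S * Sd := by
    rw [hM]
    simp only [Matrix.mul_sub, Matrix.add_mul, Matrix.mul_smul]
    rw [hSW, hVSd, hVW]
    match_scalars <;> · field_simp [hβ]; try ring
  have hMS' : M * (S + V) = S * Sd := by
    rw [hM]
    simp only [Matrix.sub_mul, Matrix.mul_add, Matrix.smul_mul]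
    rw [hSdV, hWS, hWV, hcomm]
    match_scalars <;> · field_simp [hβ]; try ring
  -- MP conditions for the candidate
  have hMmp : IsMoorePenroseInv (S + V) M := by
    refine ⟨?_, ?_, ?_, ?_⟩
    · rw [hS'M, Matrix.mul_add, hSd1, hV, _root_.mul_vecMulVec, hPx]
    · rw [hMS', ← hcomm, hM, Matrix.mul_sub, Matrix.mul_smul, _root_.mul_vecMulVec, hSd2, hPw]
    · rw [hS'M]; exact hSd3
    · rw [hMS']; exact hSd3
  have hS'deq : S'd = M := mp_unique hS'd hMmp
  rw [hS'deq]
  -- abbreviations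
  set a : ℝ := h ⬝ᵥ w with ha
  set A : ℝ := h ⬝ᵥ Sd *ᵥ h with hA
  have key1 : h ⬝ᵥ M *ᵥ h = A - β⁻¹ * a^2 := by
    rw [hM, Matrix.sub_mulVec, smul_mulVec, vecMulVec_mulVec, dotProduct_sub,
      dotProduct_smul, smul_eq_mul, dotProduct_smul, smul_eq_mul, dotProduct_comm w h, ← ha, ← hA]
    ring
  have key2 : h ⬝ᵥ M *ᵥ x = a / β := by
    rw [hM, Matrix.sub_mulVec, smul_mulVec, vecMulVec_mulVec, dotProduct_sub,
      dotProduct_smul, smul_eq_mul, dotProduct_smul, smul_eq_mul, hwxc, ← hw, ← ha]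
    field_simp [hβ]
    ring
  rw [key1, key2]
  have hβ1 : (1:ℝ) ≤ β := by rw [hβ]; linarith
  exact endgame A a β α g hβ1 hα hg
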